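/- Let D be a finite distributive lattice, graded by the rank function r (the height function), and let A = {x ∈ D : r(x) = i} and B = {x ∈ D : r(x) = j} be two distinct levels of D satisfying A ≤ B and min(|A|, |B|) = 2. Then the convex set [A, B] = {x : ∃ a ∈ A, ∃ b ∈ B, a ≤ x ≤ b} is the union of max(|A|, |B|) closed intervals [a, b] with a ∈ A, b ∈ B. -/

import Mathlib

open Classical in
private theorem exists_covby_of_lt {D : Type*} [Lattice D] [Fintype D] {x y : D}
    (h : x < y) : ∃ z, x ⋖ z ∧ z ≤ y := by
  classical
  have hne : (Finset.univ.filter (fun t => x < t ∧ t ≤ y)).Nonempty :=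
    ⟨y, by simp [h]⟩
  obtain ⟨m, hm, hmin⟩ : ∃ m ∈ Finset.univ.filter (fun t => x < t ∧ t ≤ y),
      ∀ w ∈ Finset.univ.filter (fun t => x < t ∧ t ≤ y), ¬ w < m := by
    obtain ⟨m, hm⟩ := Finset.exists_minimal hne
    exact ⟨m, hm.1, fun w hw hlt => hlt.not_ge (hm.2 hw hlt.le)⟩
  simp only [Finset.mem_filter, Finset.mem_univ, true_and] at hm
  refine ⟨m, ⟨hm.1, fun w hw hwm => ?_⟩, hm.2⟩
  exact hmin w (by simp [Finset.mem_filter, hw, hwm.le.trans hm.2]) hwm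

open Classical in
private theorem exists_le_covby {D : Type*} [Lattice D] [Fintype D] {x y : D}
    (h : x < y) : ∃ z, x ≤ z ∧ z ⋖ y := by
  classical
  have hne : (Finset.univ.filter (fun t => x ≤ t ∧ t < y)).Nonempty :=
    ⟨x, by simp [h]⟩
  obtain ⟨m, hm, hmax⟩ : ∃ m ∈ Finset.univ.filter (fun t => x ≤ t ∧ t < y),
      ∀ w ∈ Finset.univ.filter (fun t => x ≤ t ∧ t < y), ¬ m < w := by
    obtain ⟨m, hm⟩ := Finset.exists_maximal hne
    exact ⟨m, hm.1, fun w hw hlt => hlt.not_ge (hm.2 hw hlt.le)⟩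
  simp only [Finset.mem_filter, Finset.mem_univ, true_and] at hm
  refine ⟨m, hm.1, ⟨hm.2, fun w hw hwm => ?_⟩⟩
  exact hmax w (by simp [Finset.mem_filter, hwm, hm.1.trans hw.le]) hw

private theorem r_lt_of_lt {D : Type*} [Lattice D] [Fintype D]
    (r : D → ℕ) (hrcov : ∀ x y : D, x ⋖ y → r y = r x + 1) :
    ∀ {x y : D}, x < y → r x < r y := by
  intro x y h
  have wf : WellFounded ((· > ·) : D → D → Prop) := Finite.wellFounded_of_trans_of_irrefl _
  induction x using WellFounded.induction wf generalizing y with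
  | _ x IH =>
    obtain ⟨z, hz, hzy⟩ := exists_covby_of_lt h
    rcases eq_or_lt_of_le hzy with rfl | hlt
    · simp [hrcov _ _ hz]
    · have h1 : r z = r x + 1 := hrcov _ _ hz
      have h2 := IH z hz.lt hlt
      omega

private theorem r_mono {D : Type*} [Lattice D] [Fintype D]
    (r : D → ℕ) (hrcov : ∀ x y : D, x ⋖ y → r y = r x + 1) :
    ∀ {x y : D}, x ≤ y → r x ≤ r y := by
  intro x y h
  rcases eq_or_lt_of_le h with rfl | h
  · exact le_rfl
  · exact (r_lt_of_lt r hrcov h).le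

/-- chain interpolation -/
private theorem r_interp {D : Type*} [Lattice D] [Fintype D]
    (r : D → ℕ) (hrcov : ∀ x y : D, x ⋖ y → r y = r x + 1) :
    ∀ {x z : D} {k : ℕ}, x ≤ z → r x ≤ k → k ≤ r z →
      ∃ w, x ≤ w ∧ w ≤ z ∧ r w = k := by
  intro x z k hxz hxk hkz
  suffices H : ∀ n x, x ≤ z → r x ≤ k → k - r x = n → ∃ w, x ≤ w ∧ w ≤ z ∧ r w = k by
    exact H _ x hxz hxk rfl
  intro n
  induction n using Nat.strong_induction_on with
  | _ n IH =>
    intro x hxz hxk hn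
    rcases eq_or_lt_of_le hxk with heq | hlt
    · exact ⟨x, le_rfl, hxz, heq⟩
    · have hxz' : x < z := by
        rcases eq_or_lt_of_le hxz with rfl | h
        · omega
        · exact h
      obtain ⟨z', hz', hz'z⟩ := exists_covby_of_lt hxz'
      have h1 : r z' = r x + 1 := hrcov _ _ hz'
      have h2 : r z' ≤ k := by omega
      obtain ⟨w, hw1, hw2, hw3⟩ := IH (k - r z') (by omega) z' hz'z h2 rfl
      exact ⟨w, hz'.le.trans hw1, hw2, hw3⟩

private theorem covby_sup {D : Type*} [DistribLattice D] {c c' y : D}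
    (h : c ⋖ c') (hy : c' ⊓ y ≤ c) : (c ⊔ y) ⋖ (c' ⊔ y) := by
  have hne : ¬ c' ≤ c ⊔ y := by
    intro hle
    have hkey : c' = c ⊔ (c' ⊓ y) := by
      calc c' = c' ⊓ (c ⊔ y) := (inf_eq_left.mpr hle).symm
        _ = (c' ⊓ c) ⊔ (c' ⊓ y) := inf_sup_left _ _ _
        _ = c ⊔ (c' ⊓ y) := by rw [inf_eq_right.mpr h.le]
    have : c' ≤ c := hkey.le.trans (sup_le le_rfl hy)
    exact h.lt.not_ge this
  constructor
  · refine lt_of_le_of_ne (sup_le_sup_right h.le _) (fun he => hne ?_)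
    rw [he]; exact le_sup_left
  · intro w hw hw'
    have hcw : c ≤ w := le_sup_left.trans hw.le
    have hyw : y ≤ w := le_sup_right.trans hw.le
    have hwc' : c ≤ w ⊓ c' := le_inf hcw h.le
    rcases h.eq_or_eq (le_inf hcw h.le) inf_le_right with heq | heq
    · -- w ⊓ c' = c
      have : w = w ⊓ (c' ⊔ y) := (inf_eq_left.mpr hw'.le).symm
      rw [inf_sup_left, heq] at this
      have : w ≤ c ⊔ y := this.le.trans (sup_le le_sup_left (inf_le_right.trans le_sup_right))
      exact hw.not_ge this
    · -- w ⊓ c' = c'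
      have hc'w : c' ≤ w := heq ▸ inf_le_left
      exact hw'.not_ge (sup_le hc'w hyw)

private theorem mod_rank {D : Type*} [DistribLattice D] [Fintype D]
    (r : D → ℕ) (hrcov : ∀ x y : D, x ⋖ y → r y = r x + 1) :
    ∀ x y : D, r (x ⊔ y) + r (x ⊓ y) = r x + r y := by
  intro x y
  suffices H : ∀ n x, r x = n → r (x ⊔ y) + r (x ⊓ y) = r x + r y by exact H _ x rfl
  intro n
  induction n using Nat.strong_induction_on with
  | _ n IH =>
    intro x hn
    by_cases hxy : x ≤ y
    · rw [sup_eq_right.mpr hxy, inf_eq_left.mpr hxy]; omega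
    · have hlt : x ⊓ y < x := inf_le_left.lt_of_ne (fun he => hxy (inf_eq_left.mp he))
      obtain ⟨c, hc1, hc2⟩ := exists_le_covby hlt
      have hcy' : c ⊓ y = x ⊓ y := by
        apply le_antisymm
        · exact le_inf (inf_le_left.trans hc2.le) inf_le_right
        · exact le_inf hc1 inf_le_right
      have hcov2 : (c ⊔ y) ⋖ (x ⊔ y) := covby_sup hc2 hc1
      have h1 : r x = r c + 1 := hrcov _ _ hc2
      have h2 : r (x ⊔ y) = r (c ⊔ y) + 1 := hrcov _ _ hcov2
      have h3 := IH (r c) (by omega) c rfl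
      rw [hcy'] at h3
      omega

private theorem main_case {D : Type*} [DistribLattice D] [Fintype D] [BoundedOrder D]
    (r : D → ℕ) (hr0 : r ⊥ = 0) (hrcov : ∀ x y : D, x ⋖ y → r y = r x + 1)
    (i j : ℕ) (hij : i < j)
    (hA2 : {x : D | r x = i}.ncard = 2) (hB2 : 2 ≤ {x : D | r x = j}.ncard) :
    ∃ F : Finset (D × D),
      F.card ≤ {x : D | r x = j}.ncard ∧
      (∀ p ∈ F, r p.1 = i ∧ r p.2 = j) ∧
      (⋃ p ∈ F, Set.Icc p.1 p.2) =
        {x : D | (∃ a, r a = i ∧ a ≤ x) ∧ (∃ b, r b = j ∧ x ≤ b)} := by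
  classical
  have mono : ∀ {x y : D}, x ≤ y → r x ≤ r y := fun h => r_mono r hrcov h
  have strict : ∀ {x y : D}, x < y → r x < r y := fun h => r_lt_of_lt r hrcov h
  obtain ⟨a₁, a₂, hane, hAeq⟩ := Set.ncard_eq_two.mp hA2
  have ha₁ : r a₁ = i := by
    have h : a₁ ∈ {x : D | r x = i} := by rw [hAeq]; exact Set.mem_insert _ _
    exact h
  have ha₂ : r a₂ = i := by
    have h : a₂ ∈ {x : D | r x = i} := by rw [hAeq]; exact Set.mem_insert_of_mem _ rfl
    exact h
  have hlevel : ∀ x : D, r x = i → x = a₁ ∨ x = a₂ := by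
    intro x hx
    have h : x ∈ {x : D | r x = i} := hx
    rw [hAeq] at h
    simpa using h
  have hi1 : 1 ≤ i := by
    by_contra hcon
    have hbot : ∀ x : D, r x = i → x = ⊥ := by
      intro x hx
      by_contra hne
      have h1 : (⊥ : D) < x := bot_lt_iff_ne_bot.mpr hne
      have := strict h1
      omega
    exact hane ((hbot a₁ ha₁).trans (hbot a₂ ha₂).symm)
  have hBne : {x : D | r x = j}.Nonempty := by
    apply Set.nonempty_of_ncard_ne_zero; omega
  obtain ⟨b₀, hb₀⟩ := hBne
  have hb₀' : r b₀ = j := hb₀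
  have hjtop : j ≤ r ⊤ := by
    have := mono (le_top (a := b₀)); omega
  set d := a₁ ⊓ a₂ with hd
  have pinch : ∀ x : D, i ≤ r x → a₁ ≤ x ∨ a₂ ≤ x := by
    intro x hx
    obtain ⟨w, _, hwx, hw⟩ := r_interp r hrcov (bot_le : (⊥:D) ≤ x) (by omega) hx
    rcases hlevel w hw with rfl | rfl
    · exact Or.inl hwx
    · exact Or.inr hwx
  have eq_of_le_rank : ∀ x y : D, x ≤ y → r y ≤ r x → x = y := by
    intro x y h hr
    rcases eq_or_lt_of_le h with rfl | hlt
    · rfl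
    · exact absurd (strict hlt) (by omega)
  have hd_lt₁ : d < a₁ := by
    refine lt_of_le_of_ne inf_le_left (fun he => ?_)
    have h2 : a₁ ≤ a₂ := inf_eq_left.mp he
    exact hane (eq_of_le_rank _ _ h2 (by omega))
  have hd_lt₂ : d < a₂ := by
    refine lt_of_le_of_ne inf_le_right (fun he => ?_)
    have h2 : a₂ ≤ a₁ := inf_eq_right.mp he
    exact hane ((eq_of_le_rank a₂ a₁ h2 (by omega)).symm)
  have hrd : r d + 1 = i := by
    obtain ⟨z, hdz, hz⟩ := exists_le_covby hd_lt₁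
    have hrz : r z + 1 = i := by have := hrcov _ _ hz; omega
    by_cases hza : z ≤ a₂
    · have he : z = d := le_antisymm (le_inf hz.le hza) hdz
      rw [← he]; exact hrz
    · obtain ⟨u, hdu, hu⟩ := exists_le_covby hd_lt₂
      have hru : r u + 1 = i := by have := hrcov _ _ hu; omega
      by_cases hua : u ≤ a₁
      · have he : u = d := le_antisymm (le_inf hua hu.le) hdu
        rw [← he]; exact hru
      · have hz_up : ∀ w, z < w → a₁ ≤ w := by
          intro w hw
          obtain ⟨w', hw', hw'w⟩ := exists_covby_of_lt hw
          have hw'i : r w' = i := by have := hrcov _ _ hw'; omega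
          rcases hlevel w' hw'i with rfl | rfl
          · exact hw'w
          · exact absurd hw'.le hza
        have hu_up : ∀ w, u < w → a₂ ≤ w := by
          intro w hw
          obtain ⟨w', hw', hw'w⟩ := exists_covby_of_lt hw
          have hw'i : r w' = i := by have := hrcov _ _ hw'; omega
          rcases hlevel w' hw'i with rfl | rfl
          · exact absurd hw'.le hua
          · exact hw'w
        have hzu : ¬ u ≤ z := by
          intro hle
          rcases eq_or_lt_of_le hle with heq | hlt2
          · exact hua (heq ▸ hz.le)
          · have := mono (hu_up z hlt2); omega
        have huz : ¬ z ≤ u := by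
          intro hle
          rcases eq_or_lt_of_le hle with heq | hlt2
          · exact hua (heq ▸ hz.le)
          · have := mono (hz_up u hlt2); omega
        have h₁w : a₁ ≤ z ⊔ u := hz_up _ (left_lt_sup.mpr hzu)
        have h₂w : a₂ ≤ z ⊔ u := hu_up _ (right_lt_sup.mpr huz)
        have hm1 := mod_rank r hrcov a₁ a₂
        have hm2 := mod_rank r hrcov z u
        have hdzu : r d ≤ r (z ⊓ u) := mono (le_inf hdz hdu)
        have hsle : r (a₁ ⊔ a₂) ≤ r (z ⊔ u) := mono (sup_le h₁w h₂w)
        have hlt3 : i < r (a₁ ⊔ a₂) := by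
          have h4 : a₁ < a₁ ⊔ a₂ :=
            left_lt_sup.mpr (fun h => hane ((eq_of_le_rank a₂ a₁ h (by omega)).symm))
          have := strict h4; omega
        rw [← hd] at hm1
        omega
  have meet_char : ∀ x : D, a₁ ≤ x → ¬ a₂ ≤ x → x ⊓ a₂ = d := by
    intro x h1 h2
    have hdle : d ≤ x ⊓ a₂ := le_inf (inf_le_left.trans h1) inf_le_right
    have hlt : x ⊓ a₂ < a₂ := lt_of_le_of_ne inf_le_right (fun he => h2 (inf_eq_right.mp he))
    have := strict hlt
    exact (eq_of_le_rank _ _ hdle (by omega)).symm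
  have meet_char₂ : ∀ x : D, a₂ ≤ x → ¬ a₁ ≤ x → x ⊓ a₁ = d := by
    intro x h1 h2
    have hdle : d ≤ x ⊓ a₁ := le_inf (inf_le_right.trans h1) inf_le_left
    have hlt : x ⊓ a₁ < a₁ := lt_of_le_of_ne inf_le_right (fun he => h2 (inf_eq_right.mp he))
    have := strict hlt
    exact (eq_of_le_rank _ _ hdle (by omega)).symm
  have keyup : ∀ x b : D, r b = j → x ≤ b → (∀ w, r w = j → x ≤ w → w = b) →
      ∀ z, x ≤ z → j ≤ r z → b ≤ z := by
    intro x b hbj hxb huniq z hxz hjz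
    obtain ⟨w, hxw, hwz, hwj⟩ := r_interp r hrcov hxz (by have := mono hxb; omega) hjz
    exact (huniq w hwj hxw) ▸ hwz
  have claimC : ∀ x x' b : D, a₁ ≤ x → ¬ a₂ ≤ x →
      (r b = j ∧ x ≤ b ∧ ∀ w, r w = j → x ≤ w → w = b) →
      a₂ ≤ x' → ¬ a₁ ≤ x' →
      (x' ≤ b ∧ ∀ w, r w = j → x' ≤ w → w = b) → False := by
    intro x x' b hx1 hx2 hcb hx'1 hx'2 hcb'
    obtain ⟨hbj, hxb, huniq⟩ := hcb
    obtain ⟨hx'b, huniq'⟩ := hcb'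
    obtain ⟨b', hb'B, hb'ne⟩ := Set.exists_ne_of_one_lt_ncard (s := {x : D | r x = j}) (by omega) b
    have hb'j : r b' = j := hb'B
    have hs : x ⊓ x' = d := by
      have hdle : d ≤ x ⊓ x' := le_inf (inf_le_left.trans hx1) (inf_le_right.trans hx'1)
      have hrs : r (x ⊓ x') < i := by
        by_contra hcon
        rcases pinch (x ⊓ x') (by omega) with hh | hh
        · exact hx'2 (hh.trans inf_le_right)
        · exact hx2 (hh.trans inf_le_left)
      exact (eq_of_le_rank _ _ hdle (by omega)).symm
    have hb1 : b ≤ b' ⊔ x :=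
      keyup x b hbj hxb huniq _ le_sup_right
        (by have := mono (le_sup_left : b' ≤ b' ⊔ x); omega)
    have hb2 : b ≤ b' ⊔ x' :=
      keyup x' b hbj hx'b huniq' _ le_sup_right
        (by have := mono (le_sup_left : b' ≤ b' ⊔ x'); omega)
    have hdb' : d ≤ b' := by
      rcases pinch b' (by omega) with h | h
      · exact inf_le_left.trans h
      · exact inf_le_right.trans h
    have hbb' : b ≤ b' := by
      have h3 : b ≤ b' ⊔ (x ⊓ x') := (le_inf hb1 hb2).trans (sup_inf_left _ _ _).ge
      rw [hs] at h3
      exact h3.trans (sup_le le_rfl hdb')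
    exact hb'ne (eq_of_le_rank _ _ hbb' (by omega)).symm
  set marked : D → Prop := fun b => r b = j ∧
    ∃ x', a₂ ≤ x' ∧ ¬ a₁ ≤ x' ∧ x' ≤ b ∧ ∀ w, r w = j → x' ≤ w → w = b with hmarked
  have claimU : ∀ b bt : D, a₁ ≤ b → a₁ ≤ bt → marked b → marked bt → b = bt := by
    intro b bt hab habt hmb hmbt
    obtain ⟨hbj, x', hx'1, hx'2, hx'b, hx'u⟩ := hmb
    obtain ⟨hbtj, x'', hx''1, hx''2, hx''b, hx''u⟩ := hmbt
    by_contra hne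
    set z := x' ⊔ x'' with hzdef
    have hz1 : ¬ a₁ ≤ z := by
      intro hle
      have he : a₁ = d := by
        calc a₁ = a₁ ⊓ (x' ⊔ x'') := (inf_eq_left.mpr hle).symm
          _ = (a₁ ⊓ x') ⊔ (a₁ ⊓ x'') := inf_sup_left _ _ _
          _ = d ⊔ d := by
              rw [inf_comm a₁ x', meet_char₂ x' hx'1 hx'2,
                  inf_comm a₁ x'', meet_char₂ x'' hx''1 hx''2]
          _ = d := sup_idem _
      have : r a₁ = r d := by rw [he]
      omega
    by_cases hz : r z ≤ j
    · obtain ⟨w, hzw, _, hwj⟩ := r_interp r hrcov (le_top : z ≤ ⊤) hz hjtop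
      have h1 := hx'u w hwj (le_sup_left.trans hzw)
      have h2 := hx''u w hwj (le_sup_right.trans hzw)
      exact hne (h1 ▸ h2)
    · push_neg at hz
      have hbz := keyup x' b hbj hx'b hx'u z le_sup_left hz.le
      exact hz1 (hab.trans hbz)
  set blocked : D → Prop := fun x =>
    a₁ ≤ x ∧ ¬ a₂ ≤ x ∧ r x ≤ j ∧ ∀ w, r w = j → x ≤ w → a₂ ≤ w with hblocked
  obtain ⟨p₁, hp₁m, hp₁b⟩ : ∃ p₁ : D, ¬ marked p₁ ∧ ∀ x, blocked x → x ≤ p₁ ∧ r p₁ = j := by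
    by_cases hbl : ∃ x, blocked x
    · obtain ⟨x₀, hx₀⟩ := hbl
      set S : Finset D := Finset.univ.filter blocked with hS
      have hSmem : ∀ x, x ∈ S ↔ blocked x := by intro x; simp [hS]
      set W := S.sup id with hW
      have hxW : ∀ x, blocked x → x ≤ W := fun x hx => Finset.le_sup (f := id) ((hSmem x).mpr hx)
      have hW1 : a₁ ≤ W := (hx₀.1).trans (hxW _ hx₀)
      have hW2 : ¬ a₂ ≤ W := by
        intro hle
        have key : ∀ s : Finset D, (∀ x ∈ s, blocked x) → a₂ ⊓ s.sup id ≤ d := by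
          intro s
          induction s using Finset.induction_on with
          | empty => intro _; simp
          | insert _ _ hns ih =>
            intro hmem
            rw [Finset.sup_insert, inf_sup_left]
            have hb := hmem _ (Finset.mem_insert_self _ _)
            refine sup_le ?_ (ih (fun x hx => hmem x (Finset.mem_insert_of_mem hx)))
            exact le_of_eq (by simp only [id_eq]; rw [inf_comm]; exact meet_char _ hb.1 hb.2.1)
        have h2 : a₂ ≤ d := by
          have hk := key S (fun x hx => (hSmem x).mp hx)
          calc a₂ = a₂ ⊓ W := (inf_eq_left.mpr hle).symm
            _ ≤ d := hk
        have := mono h2; omega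
      have hWr : r W ≤ j := by
        by_contra hcon
        push_neg at hcon
        obtain ⟨w, hx₀w, hwW, hwj⟩ :=
          r_interp r hrcov (hxW _ hx₀) hx₀.2.2.1 hcon.le
        exact hW2 ((hx₀.2.2.2 w hwj hx₀w).trans hwW)
      by_cases hgood : ∃ w, W ≤ w ∧ r w = j ∧ ¬ marked w
      · obtain ⟨w, h1, h2, h3⟩ := hgood
        exact ⟨w, h3, fun x hx => ⟨(hxW x hx).trans h1, h2⟩⟩
      · push_neg at hgood
        obtain ⟨w₀, hWw₀, _, hw₀j⟩ := r_interp r hrcov (le_top : W ≤ ⊤) hWr hjtop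
        have hw₀m : marked w₀ := hgood w₀ hWw₀ hw₀j
        have huniqW : ∀ w, r w = j → W ≤ w → w = w₀ := by
          intro w hwj hWw
          exact claimU w w₀ (hW1.trans hWw) (hW1.trans hWw₀) (hgood w hWw hwj) hw₀m
        obtain ⟨hw₀j', x', hx'1, hx'2, hx'w, hx'u⟩ := hw₀m
        exact (claimC W x' w₀ hW1 hW2 ⟨hw₀j, hWw₀, huniqW⟩ hx'1 hx'2 ⟨hx'w, hx'u⟩).elim
    · push_neg at hbl
      refine ⟨⊥, ?_, fun x hx => absurd hx (hbl x)⟩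
      rintro ⟨hbj, -⟩
      rw [hr0] at hbj
      omega
  set f : D → D := fun b => if a₂ ≤ b then (if b = p₁ then a₁ else a₂) else a₁ with hf
  have hfmem : ∀ b, f b = a₁ ∨ f b = a₂ := by
    intro b; by_cases h1 : a₂ ≤ b <;> by_cases h2 : b = p₁ <;> simp [hf, h1, h2]
  have hfr : ∀ b, r (f b) = i := by
    intro b; rcases hfmem b with h | h <;> rw [h] <;> assumption
  set Bf : Finset D := Finset.univ.filter (fun x => r x = j) with hBf
  have hBfmem : ∀ b, b ∈ Bf ↔ r b = j := by intro b; simp [hBf]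
  have hBfcard : Bf.card = {x : D | r x = j}.ncard := by
    rw [show {x : D | r x = j} = (Bf : Set D) by ext x; simp [hBf]]
    exact (Set.ncard_coe_finset _).symm
  refine ⟨Bf.image (fun b => (f b, b)), ?_, ?_, ?_⟩
  · exact (Finset.card_image_le).trans (le_of_eq hBfcard)
  · intro p hp
    obtain ⟨b, hb, rfl⟩ := Finset.mem_image.mp hp
    exact ⟨hfr b, (hBfmem b).mp hb⟩
  · ext x
    simp only [Set.mem_iUnion, Set.mem_Icc, Set.mem_setOf_eq]
    constructor
    · rintro ⟨p, hp, hx1, hx2⟩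
      obtain ⟨b, hb, rfl⟩ := Finset.mem_image.mp hp
      exact ⟨⟨f b, hfr b, hx1⟩, ⟨b, (hBfmem b).mp hb, hx2⟩⟩
    · rintro ⟨⟨a, haj, hax⟩, ⟨b, hbj, hxb⟩⟩
      have hxi : i ≤ r x := by have := mono hax; omega
      have hxj : r x ≤ j := by have := mono hxb; omega
      have hmem : ∀ w, r w = j → f w ≤ x → x ≤ w →
          ∃ p, ∃ (_ : p ∈ Bf.image (fun b => (f b, b))), p.1 ≤ x ∧ x ≤ p.2 := by
        intro w hwj hh1 hh2
        exact ⟨(f w, w), Finset.mem_image.mpr ⟨w, (hBfmem w).mpr hwj, rfl⟩, hh1, hh2⟩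
      by_cases h1 : a₁ ≤ x <;> by_cases h2 : a₂ ≤ x
      · rcases hfmem b with h | h
        · exact hmem b hbj (by rw [h]; exact h1) hxb
        · exact hmem b hbj (by rw [h]; exact h2) hxb
      · by_cases hesc : ∃ w, r w = j ∧ x ≤ w ∧ ¬ a₂ ≤ w
        · obtain ⟨w, hwj, hxw, hwa⟩ := hesc
          have hfw : f w = a₁ := by simp [hf, hwa]
          exact hmem w hwj (by rw [hfw]; exact h1) hxw
        · push_neg at hesc
          have hblx : blocked x := ⟨h1, h2, hxj, fun w hwj hxw => hesc w hwj hxw⟩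
          obtain ⟨hxp, hpj⟩ := hp₁b x hblx
          have hfp : f p₁ = a₁ := by by_cases hh : a₂ ≤ p₁ <;> simp [hf, hh]
          exact hmem p₁ hpj (by rw [hfp]; exact h1) hxp
      · by_cases hesc : ∃ w, r w = j ∧ x ≤ w ∧ w ≠ p₁
        · obtain ⟨w, hwj, hxw, hwp⟩ := hesc
          have hfa : f w = a₂ := by simp [hf, h2.trans hxw, hwp]
          exact hmem w hwj (by rw [hfa]; exact h2) hxw
        · push_neg at hesc
          have hbp : b = p₁ := hesc b hbj hxb
          have hmp : marked p₁ :=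
            ⟨hbp ▸ hbj, x, h2, h1, hbp ▸ hxb, fun w hwj hxw => hesc w hwj hxw⟩
          exact absurd hmp hp₁m
      · rcases pinch x hxi with h | h
        · exact absurd h h1
        · exact absurd h h2

private theorem nat_sub_cancel {t a b : ℕ} (ha : a ≤ t) (hb : b ≤ t) (h : t - a = t - b) :
    a = b := by omega



/-- **Theorem 3.** Let `D` be a finite distributive lattice graded by the rank
function `r`, with distinct levels `A` and `B` satisfying `A ≤ B` and
`min(|A|, |B|) = 2`. Then `[A, B]` has a cover by `max(|A|, |B|)` intervals. -/
theorem stmt3 {D : Type*} [DistribLattice D] [Fintype D] [BoundedOrder D]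
    (r : D → ℕ) (hr0 : r ⊥ = 0) (hrcov : ∀ x y : D, x ⋖ y → r y = r x + 1)
    (i j : ℕ) (hij : i ≠ j)
    (A B : Set D) (hA : A = {x : D | r x = i}) (hB : B = {x : D | r x = j})
    (hle₁ : ∀ a ∈ A, ∃ b ∈ B, a ≤ b) (hle₂ : ∀ b ∈ B, ∃ a ∈ A, a ≤ b)
    (hmin : min A.ncard B.ncard = 2) :
    ∃ F : Finset (D × D),
      F.card ≤ max A.ncard B.ncard ∧
      (∀ p ∈ F, p.1 ∈ A ∧ p.2 ∈ B) ∧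
      (⋃ p ∈ F, Set.Icc p.1 p.2) = {x : D | ∃ a ∈ A, ∃ b ∈ B, a ≤ x ∧ x ≤ b} := by
  classical
  have mono : ∀ {x y : D}, x ≤ y → r x ≤ r y := fun h => r_mono r hrcov h
  have hA2' : 2 ≤ A.ncard := by have := min_le_left A.ncard B.ncard; omega
  have hB2' : 2 ≤ B.ncard := by have := min_le_right A.ncard B.ncard; omega
  have hAne : A.Nonempty := Set.nonempty_of_ncard_ne_zero (by omega)
  obtain ⟨a₀, ha₀⟩ := hAne
  obtain ⟨b₀, hb₀, hab₀⟩ := hle₁ a₀ ha₀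
  have hra : r a₀ = i := by rw [hA] at ha₀; exact ha₀
  have hrb : r b₀ = j := by rw [hB] at hb₀; exact hb₀
  have hij' : i < j := by have := mono hab₀; omega
  have htople : ∀ x : D, r x ≤ r ⊤ := fun x => mono le_top
  by_cases hAc : A.ncard = 2
  · obtain ⟨F, hc, hmemF, hun⟩ := main_case r hr0 hrcov i j hij'
      (by rw [← hA]; exact hAc) (by rw [← hB]; exact hB2')
    refine ⟨F, ?_, ?_, ?_⟩
    · calc F.card ≤ {x : D | r x = j}.ncard := hc
        _ = B.ncard := by rw [hB]
        _ ≤ max A.ncard B.ncard := le_max_right _ _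
    · intro p hp
      obtain ⟨h1, h2⟩ := hmemF p hp
      exact ⟨by rw [hA]; exact h1, by rw [hB]; exact h2⟩
    · rw [hun]
      ext x
      simp only [Set.mem_setOf_eq, hA, hB]
      constructor
      · rintro ⟨⟨a, h1, h2⟩, ⟨b, h3, h4⟩⟩
        exact ⟨a, h1, b, h3, h2, h4⟩
      · rintro ⟨a, h1, b, h3, h2, h4⟩
        exact ⟨⟨a, h1, h2⟩, ⟨b, h3, h4⟩⟩
  · have hBc : B.ncard = 2 := by
      rcases min_cases A.ncard B.ncard with ⟨h1, h2⟩ | ⟨h1, h2⟩ <;> omega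
    have hjle : j ≤ r ⊤ := by have := htople b₀; omega
    have hile : i ≤ r ⊤ := by omega
    set r' : Dᵒᵈ → ℕ := fun x => r ⊤ - r (OrderDual.ofDual x) with hr'
    have hr0' : r' ⊥ = 0 := by simp [hr']
    have hrcov' : ∀ x y : Dᵒᵈ, x ⋖ y → r' y = r' x + 1 := by
      intro x y h
      have h' : OrderDual.ofDual y ⋖ OrderDual.ofDual x := ⟨h.lt, fun c hc1 hc2 => h.2 hc2 hc1⟩
      have h1 := hrcov _ _ h'
      have h2 := htople (OrderDual.ofDual x)
      simp only [hr']
      omega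
    have hijd : r ⊤ - j < r ⊤ - i := by omega
    have hsetA : {x : Dᵒᵈ | r' x = r ⊤ - j} = OrderDual.toDual '' B := by
      ext x
      simp only [Set.mem_setOf_eq, hr', hB, Set.mem_image]
      constructor
      · intro h
        refine ⟨OrderDual.ofDual x, ?_, rfl⟩
        exact nat_sub_cancel (htople (OrderDual.ofDual x)) hjle h
      · rintro ⟨y, hy, rfl⟩
        simp [hy]
    have hsetB : {x : Dᵒᵈ | r' x = r ⊤ - i} = OrderDual.toDual '' A := by
      ext x
      simp only [Set.mem_setOf_eq, hr', hA, Set.mem_image]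
      constructor
      · intro h
        refine ⟨OrderDual.ofDual x, ?_, rfl⟩
        exact nat_sub_cancel (htople (OrderDual.ofDual x)) hile h
      · rintro ⟨y, hy, rfl⟩
        simp [hy]
    have hAcard : ({x : Dᵒᵈ | r' x = r ⊤ - j}).ncard = 2 := by
      rw [hsetA, Set.ncard_image_of_injective _ OrderDual.toDual.injective]
      exact hBc
    have hBcard : 2 ≤ ({x : Dᵒᵈ | r' x = r ⊤ - i}).ncard := by
      rw [hsetB, Set.ncard_image_of_injective _ OrderDual.toDual.injective]
      exact hA2'
    obtain ⟨F', hc, hmemF, hun⟩ :=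
      main_case (D := Dᵒᵈ) r' hr0' hrcov' (r ⊤ - j) (r ⊤ - i) hijd hAcard hBcard
    refine ⟨F'.image (fun p => (OrderDual.ofDual p.2, OrderDual.ofDual p.1)), ?_, ?_, ?_⟩
    · calc _ ≤ F'.card := Finset.card_image_le
        _ ≤ ({x : Dᵒᵈ | r' x = r ⊤ - i}).ncard := hc
        _ = A.ncard := by
            rw [hsetB, Set.ncard_image_of_injective _ OrderDual.toDual.injective]
        _ ≤ max A.ncard B.ncard := le_max_left _ _
    · intro p hp
      obtain ⟨q, hq, rfl⟩ := Finset.mem_image.mp hp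
      obtain ⟨h1, h2⟩ := hmemF q hq
      have hq2 : r (OrderDual.ofDual q.2) = i := by
        simp only [hr'] at h2
        exact nat_sub_cancel (htople (OrderDual.ofDual q.2)) hile h2
      have hq1 : r (OrderDual.ofDual q.1) = j := by
        simp only [hr'] at h1
        exact nat_sub_cancel (htople (OrderDual.ofDual q.1)) hjle h1
      exact ⟨by rw [hA]; exact hq2, by rw [hB]; exact hq1⟩
    · ext x
      have hx := Set.ext_iff.mp hun (OrderDual.toDual x)
      simp only [Set.mem_iUnion, Set.mem_Icc, Set.mem_setOf_eq] at hx ⊢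
      constructor
      · rintro ⟨p, hp, hx1, hx2⟩
        obtain ⟨q, hq, rfl⟩ := Finset.mem_image.mp hp
        have hm := hx.mp ⟨q, hq, hx2, hx1⟩
        obtain ⟨⟨a, haa, hax⟩, ⟨b, hbb, hxb⟩⟩ := hm
        refine ⟨OrderDual.ofDual b, ?_, OrderDual.ofDual a, ?_, hxb, hax⟩
        · rw [hA]
          simp only [hr'] at hbb
          show r (OrderDual.ofDual b) = i
          exact nat_sub_cancel (htople (OrderDual.ofDual b)) hile hbb
        · rw [hB]
          simp only [hr'] at haa
          show r (OrderDual.ofDual a) = j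
          exact nat_sub_cancel (htople (OrderDual.ofDual a)) hjle haa
      · rintro ⟨a, haA, b, hbB, hax, hxb⟩
        have hra' : r a = i := by rw [hA] at haA; exact haA
        have hrb' : r b = j := by rw [hB] at hbB; exact hbB
        have hbd : r' (OrderDual.toDual b) = r ⊤ - j := by
          show r ⊤ - r b = r ⊤ - j; rw [hrb']
        have had : r' (OrderDual.toDual a) = r ⊤ - i := by
          show r ⊤ - r a = r ⊤ - i; rw [hra']
        have hm := hx.mpr ⟨⟨OrderDual.toDual b, hbd, hxb⟩, ⟨OrderDual.toDual a, had, hax⟩⟩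
        obtain ⟨q, hq, hq1, hq2⟩ := hm
        exact ⟨(OrderDual.ofDual q.2, OrderDual.ofDual q.1),
          Finset.mem_image.mpr ⟨q, hq, rfl⟩, hq2, hq1⟩
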